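/- Let a ≥ 2 and let p be a prime not dividing a. Then p² divides a^{p-1} − 1 if and only if p² divides Φ̃_{d}(a), where d = o_p(a) is the multiplicative order of a modulo p and Φ̃_d(a) = Φ_d(a)/gcd(Φ_d(a), d). -/

import Mathlib

open Polynomial

/-- If `p ∤ m`, then `p² ∣ k * m ↔ p² ∣ k`. -/
lemma sq_dvd_mul_iff_aux (p : ℕ) (hp : p.Prime) (m k : ℤ) (hm : ¬ (p : ℤ) ∣ m) :
    (p : ℤ) ^ 2 ∣ k * m ↔ (p : ℤ) ^ 2 ∣ k := by
  have hprime : Prime (p : ℤ) := Int.prime_iff_natAbs_prime.mpr (by simpa using hp)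
  have hc : IsCoprime ((p : ℤ) ^ 2) m :=
    (hprime.coprime_iff_not_dvd.mpr hm).pow_left
  exact ⟨fun h => hc.dvd_of_dvd_mul_right h, fun h => h.mul_right m⟩

/-- For `a ≥ 2` and `p` a prime not dividing `a`,
`p² ∣ a^(p-1) - 1` iff `p² ∣ Φ̃_d(a)` where `d = o_p(a)`. -/
theorem fermat_quotient_zero_iff_sq_dvd_tilde_cyclotomic
    (a : ℤ) (ha : 2 ≤ a) (p : ℕ) (hp : p.Prime) (hpa : ¬ (p : ℤ) ∣ a) :
    (p : ℤ) ^ 2 ∣ a ^ (p - 1) - 1 ↔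
      (p : ℤ) ^ 2 ∣
        (Polynomial.cyclotomic (orderOf ((a : ZMod p))) ℤ).eval a /
          (Int.gcd ((Polynomial.cyclotomic (orderOf ((a : ZMod p))) ℤ).eval a)
            ((orderOf ((a : ZMod p)) : ℕ) : ℤ) : ℤ) := by
  haveI : Fact p.Prime := ⟨hp⟩
  set d := orderOf ((a : ZMod p)) with hd
  have ha0 : (a : ZMod p) ≠ 0 := fun h => hpa ((ZMod.intCast_zmod_eq_zero_iff_dvd a p).mp h)
  have hfermat : (a : ZMod p) ^ (p - 1) = 1 := ZMod.pow_card_sub_one_eq_one ha0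
  have hddvd : d ∣ p - 1 := orderOf_dvd_of_pow_eq_one hfermat
  have hn : 0 < p - 1 := Nat.sub_pos_of_lt hp.one_lt
  have hnp : p - 1 < p := Nat.sub_lt hp.pos one_pos
  have hd0 : 0 < d := Nat.pos_of_dvd_of_pos hddvd hn
  -- for any divisor e of p-1 with p ∣ Φ_e(a), we get e = d
  have key : ∀ e ∈ (p - 1).divisors, (p : ℤ) ∣ (cyclotomic e ℤ).eval a → e = d := by
    intro e he hdvd
    obtain ⟨hedvd, -⟩ := Nat.mem_divisors.mp he
    have he0 : 0 < e := Nat.pos_of_dvd_of_pos hedvd hn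
    have hep : ¬ p ∣ e := fun h =>
      absurd (Nat.le_of_dvd he0 h) (not_le.mpr ((Nat.le_of_dvd hn hedvd).trans_lt hnp))
    haveI : NeZero ((e : ℕ) : ZMod p) :=
      ⟨fun h => hep ((ZMod.natCast_eq_zero_iff e p).mp h)⟩
    have hroot : (cyclotomic e (ZMod p)).IsRoot (a : ZMod p) := by
      rw [IsRoot.def, ← map_cyclotomic_int e (ZMod p), eval_map]
      have : (((cyclotomic e ℤ).eval a : ℤ) : ZMod p) = 0 :=
        (ZMod.intCast_zmod_eq_zero_iff_dvd _ p).mpr hdvd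
      calc (cyclotomic e ℤ).eval₂ (Int.castRingHom (ZMod p)) ((a : ℤ) : ZMod p)
          = (Int.castRingHom (ZMod p)) ((cyclotomic e ℤ).eval a) := by
            rw [← eval₂_hom]; norm_num
        _ = 0 := this
    exact ((isRoot_cyclotomic_iff.mp hroot).eq_orderOf).symm ▸ rfl
  -- factorization of a^(p-1) - 1
  have hmemd : d ∈ (p - 1).divisors := Nat.mem_divisors.mpr ⟨hddvd, hn.ne'⟩
  have hsplit : a ^ (p - 1) - 1 =
      (cyclotomic d ℤ).eval a *
        ∏ e ∈ (p - 1).divisors.erase d, (cyclotomic e ℤ).eval a := by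
    have := congrArg (Polynomial.eval a) (prod_cyclotomic_eq_X_pow_sub_one hn ℤ)
    rw [eval_prod, eval_sub, eval_pow, eval_X, eval_one] at this
    rw [← this]
    exact (Finset.mul_prod_erase _ (fun e => (cyclotomic e ℤ).eval a) hmemd).symm
  set M : ℤ := ∏ e ∈ (p - 1).divisors.erase d, (cyclotomic e ℤ).eval a with hM
  have hpM : ¬ (p : ℤ) ∣ M := by
    intro h
    obtain ⟨e, hemem, hedvd⟩ := (Int.prime_iff_natAbs_prime.mpr (by simpa using hp)).exists_mem_finset_dvd h
    obtain ⟨hne, hemem'⟩ := Finset.mem_erase.mp hemem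
    exact hne (key e hemem' hedvd)
  -- the gcd part
  set Φ : ℤ := (cyclotomic d ℤ).eval a with hΦ
  set g : ℤ := (Int.gcd Φ (d : ℤ) : ℤ) with hg
  have hgΦ : g ∣ Φ := Int.gcd_dvd_left _ _
  have hgd : g ∣ (d : ℤ) := Int.gcd_dvd_right _ _
  have hpg : ¬ (p : ℤ) ∣ g := by
    intro h
    have hpd : (p : ℤ) ∣ (d : ℤ) := h.trans hgd
    have : p ∣ d := Int.natCast_dvd_natCast.mp hpd
    exact absurd (Nat.le_of_dvd hd0 this) (not_le.mpr ((Nat.le_of_dvd hn hddvd).trans_lt hnp))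
  have hΦeq : Φ = g * (Φ / g) := (Int.mul_ediv_cancel' hgΦ).symm
  calc (p : ℤ) ^ 2 ∣ a ^ (p - 1) - 1
      ↔ (p : ℤ) ^ 2 ∣ Φ * M := by rw [hsplit]
    _ ↔ (p : ℤ) ^ 2 ∣ Φ := sq_dvd_mul_iff_aux p hp M Φ hpM
    _ ↔ (p : ℤ) ^ 2 ∣ g * (Φ / g) := by rw [← hΦeq]
    _ ↔ (p : ℤ) ^ 2 ∣ (Φ / g) := by
        rw [mul_comm]; exact sq_dvd_mul_iff_aux p hp g (Φ / g) hpg
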